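/- Let D be a continuous discount function. Then D satisfies the extended one-switch property if and only if D satisfies the extended weak one-switch property. -/

import Mathlib

def IsDiscount (D : ℝ → ℝ) : Prop :=
  D 0 = 1 ∧ (∀ t, 0 ≤ t → 0 < D t) ∧ StrictAntiOn D (Set.Ici 0) ∧
    Filter.Tendsto D Filter.atTop (nhds 0)

def OneSwitchSign (Δ : ℝ → ℝ) : Prop :=
  (∀ σ, 0 ≤ σ → 0 < Δ σ) ∨ (∀ σ, 0 ≤ σ → Δ σ < 0) ∨ (∀ σ, 0 ≤ σ → Δ σ = 0) ∨
    ∃ σs : ℝ, 0 ≤ σs ∧ (∀ σ, 0 ≤ σ → (Δ σ = 0 ↔ σ = σs)) ∧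
      (∀ σ' σ'', 0 ≤ σ' → 0 ≤ σ'' →
        ((σ' < σs ∧ σ'' < σs) ∨ (σs < σ' ∧ σs < σ'')) → 0 < Δ σ' * Δ σ'') ∧
      (∀ σ' σ'', 0 ≤ σ' → σ' < σs → σs < σ'' → Δ σ' * Δ σ'' < 0)

noncomputable def diffFn {n m : ℕ} (D : ℝ → ℝ) (t : Fin n → ℝ) (s : Fin m → ℝ)
    (v : Fin n → ℝ) (w : Fin m → ℝ) : ℝ → ℝ :=
  fun σ => (∑ i, D (t i + σ) * v i) - (∑ j, D (s j + σ) * w j)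

def ExtOneSwitch (D : ℝ → ℝ) : Prop :=
  ∀ (n m : ℕ), 0 < n → 0 < m →
    ∀ (t : Fin n → ℝ) (s : Fin m → ℝ) (v : Fin n → ℝ) (w : Fin m → ℝ),
      StrictMono t → StrictMono s → (∀ i, 0 ≤ t i) → (∀ j, 0 ≤ s j) →
      (∀ i, 0 ≤ v i) → (∀ j, 0 ≤ w j) → OneSwitchSign (diffFn D t s v w)

def DoubleSwitch (Δ : ℝ → ℝ) : Prop :=
  ∃ σ₁ σ₂ σ₃ : ℝ, 0 ≤ σ₁ ∧ σ₁ < σ₂ ∧ σ₂ < σ₃ ∧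
    ((0 < Δ σ₁ ∧ Δ σ₂ < 0 ∧ 0 < Δ σ₃) ∨ (Δ σ₁ < 0 ∧ 0 < Δ σ₂ ∧ Δ σ₃ < 0))

def ExtWeakOneSwitch (D : ℝ → ℝ) : Prop :=
  ∀ (n m : ℕ), 0 < n → 0 < m →
    ∀ (t : Fin n → ℝ) (s : Fin m → ℝ) (v : Fin n → ℝ) (w : Fin m → ℝ),
      StrictMono t → StrictMono s → (∀ i, 0 ≤ t i) → (∀ j, 0 ≤ s j) →
      (∀ i, 0 ≤ v i) → (∀ j, 0 ≤ w j) → ¬ DoubleSwitch (diffFn D t s v w)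

/- ----------------- auxiliary machinery ----------------- -/

private lemma oss_noDS {Δ : ℝ → ℝ} (h : OneSwitchSign Δ) : ¬ DoubleSwitch Δ := by
  rintro ⟨σ₁, σ₂, σ₃, h0, h12, h23, hpat⟩
  have h20 : 0 ≤ σ₂ := by linarith
  have h30 : 0 ≤ σ₃ := by linarith
  rcases h with h | h | h | ⟨σs, hσs, hiff, hsame, hdiff⟩
  · rcases hpat with ⟨_, h2, _⟩ | ⟨h1, _, _⟩
    · exact absurd (h σ₂ h20) (by linarith)
    · exact absurd (h σ₁ h0) (by linarith)
  · rcases hpat with ⟨h1, _, _⟩ | ⟨_, h2, _⟩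
    · exact absurd (h σ₁ h0) (by linarith)
    · exact absurd (h σ₂ h20) (by linarith)
  · rcases hpat with ⟨h1, _, _⟩ | ⟨h1, _, _⟩ <;>
      exact absurd (h σ₁ h0) (by linarith)
  · rcases hpat with ⟨h1, h2, h3⟩ | ⟨h1, h2, h3⟩
    · rcases lt_trichotomy σ₂ σs with hc | hc | hc
      · have := hsame σ₁ σ₂ h0 h20 (Or.inl ⟨by linarith, hc⟩)
        nlinarith
      · have := (hiff σ₂ h20).mpr hc; linarith
      · have := hsame σ₂ σ₃ h20 h30 (Or.inr ⟨hc, by linarith⟩)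
        nlinarith
    · rcases lt_trichotomy σ₂ σs with hc | hc | hc
      · have := hsame σ₁ σ₂ h0 h20 (Or.inl ⟨by linarith, hc⟩)
        nlinarith
      · have := (hiff σ₂ h20).mpr hc; linarith
      · have := hsame σ₂ σ₃ h20 h30 (Or.inr ⟨hc, by linarith⟩)
        nlinarith

private lemma oss_neg {Δ : ℝ → ℝ} (h : OneSwitchSign (fun σ => -Δ σ)) :
    OneSwitchSign Δ := by
  rcases h with h | h | h | ⟨σs, hσs, hiff, hsame, hdiff⟩
  · right; left; intro σ hσ; have := h σ hσ; simp only at this; linarith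
  · left; intro σ hσ; have := h σ hσ; simp only at this; linarith
  · right; right; left; intro σ hσ; have := h σ hσ; simp only at this; linarith
  · right; right; right
    refine ⟨σs, hσs, fun σ hσ => ?_, fun σ' σ'' h1 h2 h3 => ?_, fun σ' σ'' h1 h2 h3 => ?_⟩
    · have := hiff σ hσ; simp only at this
      constructor
      · intro hz; exact this.mp (by linarith)
      · intro hz; have := this.mpr hz; linarith
    · have := hsame σ' σ'' h1 h2 h3; simp only at this; nlinarith
    · have := hdiff σ' σ'' h1 h2 h3; simp only at this; nlinarith

private lemma noDS_congr {f g : ℝ → ℝ} (h : ∀ σ, f σ = g σ) (hf : ¬ DoubleSwitch f) :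
    ¬ DoubleSwitch g := by
  have : g = f := funext fun σ => (h σ).symm
  rwa [this]

private lemma cont_close {Δ : ℝ → ℝ} (hΔ : ContinuousOn Δ (Set.Ici 0)) {e r : ℝ}
    (he : 0 ≤ e) (hr : 0 < r) :
    ∃ η > 0, ∀ σ, 0 ≤ σ → |σ - e| < η → |Δ σ - Δ e| < r := by
  have h := hΔ e (Set.mem_Ici.mpr he)
  rw [Metric.continuousWithinAt_iff] at h
  obtain ⟨η, hη, hh⟩ := h r hr
  refine ⟨η, hη, fun σ hσ hd => ?_⟩
  have := hh (Set.mem_Ici.mpr hσ) (by rwa [Real.dist_eq])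
  rwa [Real.dist_eq] at this

noncomputable def combF (D : ℝ → ℝ) (F : Finset ℝ) (c : ℝ → ℝ) : ℝ → ℝ :=
  fun σ => ∑ x ∈ F, c x * D (x + σ)

private lemma comb_noDS (D : ℝ → ℝ) (hW : ExtWeakOneSwitch D) (F : Finset ℝ)
    (hne : F.Nonempty) (hF : ∀ x ∈ F, 0 ≤ x) (c : ℝ → ℝ) :
    ¬ DoubleSwitch (combF D F c) := by
  have hn0 : 0 < F.card := Finset.card_pos.mpr hne
  set e := F.orderIsoOfFin rfl with he
  set t : Fin F.card → ℝ := fun i => (e i : ℝ) with ht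
  have htm : StrictMono t := fun i j hij => Subtype.coe_lt_coe.mpr (e.strictMono hij)
  have ht0 : ∀ i, 0 ≤ t i := fun i => hF _ (e i).2
  have key := hW F.card F.card hn0 hn0 t t (fun i => max (c (t i)) 0)
    (fun i => max (-(c (t i))) 0) htm htm ht0 ht0
    (fun i => le_max_right _ _) (fun i => le_max_right _ _)
  have heq : combF D F c = diffFn D t t (fun i => max (c (t i)) 0)
      (fun i => max (-(c (t i))) 0) := by
    funext σ
    unfold combF diffFn
    rw [← Finset.sum_sub_distrib]
    have step : ∀ i : Fin F.card,
        D (t i + σ) * max (c (t i)) 0 - D (t i + σ) * max (-(c (t i))) 0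
          = c (t i) * D (t i + σ) := by
      intro i
      have hm : max (c (t i)) 0 - max (-(c (t i))) 0 = c (t i) := by
        rcases le_total (c (t i)) 0 with h | h
        · rw [max_eq_right h, max_eq_left (by linarith : (0:ℝ) ≤ -(c (t i)))]; ring
        · rw [max_eq_left h, max_eq_right (by linarith : -(c (t i)) ≤ 0)]; ring
      rw [← mul_sub, hm, mul_comm]
    rw [show (∑ i : Fin F.card,
        (D (t i + σ) * max (c (t i)) 0 - D (t i + σ) * max (-(c (t i))) 0))
        = ∑ i : Fin F.card, c (t i) * D (t i + σ) from
      Finset.sum_congr rfl (fun i _ => step i)]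
    rw [Fintype.sum_equiv e.toEquiv (fun i => c (t i) * D (t i + σ))
      (fun x : {x // x ∈ F} => c (x : ℝ) * D ((x : ℝ) + σ)) (fun i => rfl)]
    rw [Finset.sum_coe_sort F (fun x => c x * D (x + σ))]
  rw [heq]
  exact key

noncomputable def coefOf {n m : ℕ} (t : Fin n → ℝ) (s : Fin m → ℝ)
    (v : Fin n → ℝ) (w : Fin m → ℝ) (c₀ : ℝ) : ℝ → ℝ :=
  fun x => (∑ i ∈ Finset.univ.filter (fun i => t i + c₀ = x), v i) -
           (∑ j ∈ Finset.univ.filter (fun j => s j + c₀ = x), w j)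

private lemma combF_coefOf (D : ℝ → ℝ) {n m : ℕ} (t : Fin n → ℝ) (s : Fin m → ℝ)
    (v : Fin n → ℝ) (w : Fin m → ℝ) (c₀ : ℝ) (F : Finset ℝ)
    (htF : ∀ i, t i + c₀ ∈ F) (hsF : ∀ j, s j + c₀ ∈ F) (σ : ℝ) :
    combF D F (coefOf t s v w c₀) σ = diffFn D t s v w (σ + c₀) := by
  unfold combF coefOf diffFn
  have lhs : ∑ x ∈ F, ((∑ i ∈ Finset.univ.filter (fun i => t i + c₀ = x), v i) -
        (∑ j ∈ Finset.univ.filter (fun j => s j + c₀ = x), w j)) * D (x + σ)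
      = (∑ x ∈ F, ∑ i ∈ Finset.univ.filter (fun i => t i + c₀ = x), v i * D (x + σ))
        - (∑ x ∈ F, ∑ j ∈ Finset.univ.filter (fun j => s j + c₀ = x), w j * D (x + σ)) := by
    rw [← Finset.sum_sub_distrib]
    refine Finset.sum_congr rfl (fun x _ => ?_)
    rw [sub_mul, Finset.sum_mul, Finset.sum_mul]
  rw [lhs]
  have t1 : (∑ x ∈ F, ∑ i ∈ Finset.univ.filter (fun i => t i + c₀ = x), v i * D (x + σ))
      = ∑ i, v i * D (t i + c₀ + σ) := by
    rw [← Finset.sum_fiberwise_of_maps_to (fun i _ => htF i)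
      (fun i => v i * D (t i + c₀ + σ))]
    refine Finset.sum_congr rfl (fun x _ => Finset.sum_congr rfl (fun i hi => ?_))
    rw [(Finset.mem_filter.mp hi).2]
  have t2 : (∑ x ∈ F, ∑ j ∈ Finset.univ.filter (fun j => s j + c₀ = x), w j * D (x + σ))
      = ∑ j, w j * D (s j + c₀ + σ) := by
    rw [← Finset.sum_fiberwise_of_maps_to (fun j _ => hsF j)
      (fun j => w j * D (s j + c₀ + σ))]
    refine Finset.sum_congr rfl (fun x _ => Finset.sum_congr rfl (fun j hj => ?_))
    rw [(Finset.mem_filter.mp hj).2]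
  rw [t1, t2]
  congr 1
  · refine Finset.sum_congr rfl (fun i _ => ?_)
    rw [show t i + c₀ + σ = t i + (σ + c₀) by ring, mul_comm]
  · refine Finset.sum_congr rfl (fun j _ => ?_)
    rw [show s j + c₀ + σ = s j + (σ + c₀) by ring, mul_comm]

private lemma master_pert (D : ℝ → ℝ) (hW : ExtWeakOneSwitch D) {n m : ℕ}
    (t : Fin n → ℝ) (s : Fin m → ℝ) (v : Fin n → ℝ) (w : Fin m → ℝ)
    (ht0 : ∀ i, 0 ≤ t i) (hs0 : ∀ j, 0 ≤ s j)
    (α β γ c₀ c₁ : ℝ) (hc₀ : 0 ≤ c₀) (hc₁ : 0 ≤ c₁) :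
    ¬ DoubleSwitch (fun σ =>
      α * diffFn D t s v w (σ + c₀) + β * diffFn D t s v w (σ + c₁) + γ * D σ) := by
  classical
  set F : Finset ℝ :=
    ((Finset.univ.image fun i => t i + c₀) ∪ (Finset.univ.image fun j => s j + c₀) ∪
     (Finset.univ.image fun i => t i + c₁) ∪ (Finset.univ.image fun j => s j + c₁)) ∪ {0}
    with hF
  have h0F : (0:ℝ) ∈ F := by simp [hF]
  have hFnn : ∀ x ∈ F, 0 ≤ x := by
    intro x hx
    simp only [hF, Finset.mem_union, Finset.mem_image, Finset.mem_singleton,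
      Finset.mem_univ, true_and] at hx
    rcases hx with (((⟨i, hi⟩ | ⟨j, hj⟩) | ⟨i, hi⟩) | ⟨j, hj⟩) | h
    · rw [← hi]; exact add_nonneg (ht0 i) hc₀
    · rw [← hj]; exact add_nonneg (hs0 j) hc₀
    · rw [← hi]; exact add_nonneg (ht0 i) hc₁
    · rw [← hj]; exact add_nonneg (hs0 j) hc₁
    · rw [h]
  have ht0F : ∀ i, t i + c₀ ∈ F := fun i => by simp [hF]
  have hs0F : ∀ j, s j + c₀ ∈ F := fun j => by simp [hF]
  have ht1F : ∀ i, t i + c₁ ∈ F := fun i => by simp [hF]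
  have hs1F : ∀ j, s j + c₁ ∈ F := fun j => by simp [hF]
  set cc : ℝ → ℝ := fun x => α * coefOf t s v w c₀ x + β * coefOf t s v w c₁ x +
    (if x = 0 then γ else 0) with hcc
  have key := comb_noDS D hW F ⟨0, h0F⟩ hFnn cc
  refine noDS_congr (fun σ => ?_) key
  unfold combF
  have expand : ∑ x ∈ F, cc x * D (x + σ)
      = α * (∑ x ∈ F, coefOf t s v w c₀ x * D (x + σ))
        + β * (∑ x ∈ F, coefOf t s v w c₁ x * D (x + σ))
        + (∑ x ∈ F, (if x = 0 then γ else 0) * D (x + σ)) := by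
    rw [Finset.mul_sum, Finset.mul_sum, ← Finset.sum_add_distrib, ← Finset.sum_add_distrib]
    refine Finset.sum_congr rfl (fun x _ => ?_)
    simp only [hcc]; ring
  have last : (∑ x ∈ F, (if x = 0 then γ else 0) * D (x + σ)) = γ * D σ := by
    have : ∀ x ∈ F, (if x = 0 then γ else 0) * D (x + σ)
        = if x = 0 then γ * D (x + σ) else 0 := by
      intro x _; split <;> simp
    rw [Finset.sum_congr rfl this, Finset.sum_ite_eq' F 0 (fun x => γ * D (x + σ))]
    simp [h0F]
  have e0 := combF_coefOf D t s v w c₀ F ht0F hs0F σ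
  have e1 := combF_coefOf D t s v w c₁ F ht1F hs1F σ
  unfold combF at e0 e1
  rw [expand, last, e0, e1]

/- ----------------- real-analysis core ----------------- -/

private lemma eps_mul_ge {ε d : ℝ} (hε : ε ≤ 0) (hd : d ≤ 1) : ε ≤ ε * d := by nlinarith

private lemma eps_mul_le {ε d : ℝ} (hε : 0 ≤ ε) (hd : d ≤ 1) : ε * d ≤ ε := by nlinarith

private lemma lemP (Δ D : ℝ → ℝ) (hΔ : ContinuousOn Δ (Set.Ici 0))
    (hD1 : ∀ σ, 0 ≤ σ → 0 < D σ) (hD2 : ∀ σ, 0 ≤ σ → D σ ≤ 1)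
    (H : ∀ α β γ c₀ c₁ : ℝ, 0 ≤ c₀ → 0 ≤ c₁ →
      ¬ DoubleSwitch (fun σ => α * Δ (σ + c₀) + β * Δ (σ + c₁) + γ * D σ))
    (hnn : ∀ σ, 0 ≤ σ → 0 ≤ Δ σ) (τ : ℝ) (hτ0 : 0 ≤ τ) (hτ : 0 < Δ τ) :
    OneSwitchSign Δ := by
  have Hε : ∀ ε : ℝ, ¬ DoubleSwitch (fun σ => Δ σ + ε * D σ) := by
    intro ε
    refine noDS_congr (fun σ => ?_) (H 1 0 ε 0 0 le_rfl le_rfl)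
    simp
  have no0P0 : ∀ x y z : ℝ, 0 ≤ x → x < y → y < z → Δ x = 0 → 0 < Δ y → Δ z = 0 → False := by
    intro x y z hx hxy hyz h1 h2 h3
    have hy : 0 ≤ y := hx.trans hxy.le
    have hz0 : 0 ≤ z := hy.trans hyz.le
    set ε := -(Δ y) / 2 with hε
    have hε0 : ε < 0 := by rw [hε]; linarith
    have v1 : Δ x + ε * D x < 0 := by
      have := mul_neg_of_neg_of_pos hε0 (hD1 x hx); linarith
    have v2 : 0 < Δ y + ε * D y := by
      have := eps_mul_ge hε0.le (hD2 y hy); linarith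
    have v3 : Δ z + ε * D z < 0 := by
      have := mul_neg_of_neg_of_pos hε0 (hD1 z hz0); linarith
    exact Hε ε ⟨x, y, z, hx, hxy, hyz, Or.inr ⟨v1, v2, v3⟩⟩
  have noP0P : ∀ x y z : ℝ, 0 ≤ x → x < y → y < z → 0 < Δ x → Δ y = 0 → 0 < Δ z → False := by
    intro x y z hx hxy hyz h1 h2 h3
    have hy : 0 ≤ y := hx.trans hxy.le
    have hz0 : 0 ≤ z := hy.trans hyz.le
    have hm : 0 < min (Δ x) (Δ z) := lt_min h1 h3
    set ε := -(min (Δ x) (Δ z)) / 2 with hε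
    have hε0 : ε < 0 := by rw [hε]; linarith
    have hεx : -(Δ x) / 2 ≤ ε := by rw [hε]; linarith [min_le_left (Δ x) (Δ z)]
    have hεz : -(Δ z) / 2 ≤ ε := by rw [hε]; linarith [min_le_right (Δ x) (Δ z)]
    have v1 : 0 < Δ x + ε * D x := by
      have := eps_mul_ge hε0.le (hD2 x hx); linarith
    have v2 : Δ y + ε * D y < 0 := by
      have := mul_neg_of_neg_of_pos hε0 (hD1 y hy); linarith
    have v3 : 0 < Δ z + ε * D z := by
      have := eps_mul_ge hε0.le (hD2 z hz0); linarith
    exact Hε ε ⟨x, y, z, hx, hxy, hyz, Or.inl ⟨v1, v2, v3⟩⟩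
  by_cases hzab : ∃ z, τ < z ∧ Δ z = 0
  · -- tail-zero scenario: contradiction
    exfalso
    obtain ⟨z, hτz, hzz⟩ := hzab
    have hz0 : 0 ≤ z := hτ0.trans hτz.le
    have hPlt : ∀ p, 0 ≤ p → 0 < Δ p → p ≤ z := by
      intro p h0 hp
      by_contra hc; push_neg at hc
      exact noP0P τ z p hτ0 hτz hc hτ hzz hp
    set P : Set ℝ := {σ | 0 ≤ σ ∧ 0 < Δ σ} with hP
    have hPne : P.Nonempty := ⟨τ, hτ0, hτ⟩
    have hPb : BddAbove P := ⟨z, fun p hp => hPlt p hp.1 hp.2⟩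
    set b := sSup P with hb
    have hτb : τ ≤ b := le_csSup hPb ⟨hτ0, hτ⟩
    have hb0 : 0 ≤ b := hτ0.trans hτb
    have tail : ∀ σ, b < σ → Δ σ = 0 := by
      intro σ hσ
      have h0 : 0 ≤ σ := hb0.trans hσ.le
      rcases eq_or_lt_of_le (hnn σ h0) with h | h
      · exact h.symm
      · exact absurd (le_csSup hPb ⟨h0, h⟩) (by linarith)
    have hΔ0 : 0 < Δ 0 := by
      rcases eq_or_lt_of_le hτ0 with h | h
      · rwa [← h] at hτ
      · rcases eq_or_lt_of_le (hnn 0 le_rfl) with h0 | h0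
        · exact (no0P0 0 τ z le_rfl h hτz h0.symm hτ hzz).elim
        · exact h0
    have hpos : ∀ σ, 0 ≤ σ → σ < b → 0 < Δ σ := by
      intro σ h0 hσb
      obtain ⟨p, hp, hσp⟩ := exists_lt_of_lt_csSup hPne hσb
      rcases eq_or_lt_of_le h0 with h | h
      · rw [← h]; exact hΔ0
      · rcases eq_or_lt_of_le (hnn σ h0) with hz' | hp'
        · exact (noP0P 0 σ p le_rfl h hσp hΔ0 hz'.symm hp.2).elim
        · exact hp'
    have hΔb : Δ b = 0 := by
      rcases eq_or_lt_of_le (hnn b hb0) with h | h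
      · exact h.symm
      · exfalso
        obtain ⟨η, hη, hcl⟩ := cont_close hΔ hb0 h
        have h1 : 0 ≤ b + η / 2 := by linarith
        have h3 : |b + η / 2 - b| < η := by
          rw [show b + η / 2 - b = η / 2 by ring, abs_of_pos (by linarith)]; linarith
        have hcl2 := hcl _ h1 h3
        rw [abs_lt] at hcl2
        have h6 : b + η / 2 ∈ P := ⟨h1, by linarith⟩
        have := le_csSup hPb h6
        linarith
    have hbpos : 0 < b := by
      obtain ⟨η, hη, hcl⟩ := cont_close hΔ le_rfl hΔ0
      have h1 : (0:ℝ) ≤ η / 2 := by linarith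
      have h3 : |η / 2 - 0| < η := by
        rw [sub_zero, abs_of_pos (by linarith)]; linarith
      have hcl2 := hcl _ h1 h3
      rw [abs_lt] at hcl2
      have h6 : η / 2 ∈ P := ⟨h1, by linarith⟩
      have := le_csSup hPb h6
      linarith
    have hAc : 0 < Δ (b / 2) := hpos _ (by linarith) (by linarith)
    have hA2 : 0 < Δ (3 * b / 4) := hpos _ (by linarith) (by linarith)
    have hz1 : Δ (3 * b / 4 + b / 2) = 0 := tail _ (by linarith)
    have hz2' : Δ (b + b / 2) = 0 := tail _ (by linarith)
    set lam := (Δ 0 + 1) / Δ (b / 2) with hlam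
    have hlameq : lam * Δ (b / 2) = Δ 0 + 1 := by
      rw [hlam]; exact div_mul_cancel₀ _ (ne_of_gt hAc)
    set δ := Δ (3 * b / 4) / 2 with hδ
    have hδ0 : 0 < δ := by rw [hδ]; linarith
    clear_value lam δ b
    have v1 : 1 * Δ (0 + 0) + (-lam) * Δ (0 + b / 2) + (-δ) * D 0 < 0 := by
      simp only [zero_add]
      have := mul_pos hδ0 (hD1 0 le_rfl)
      linarith [hlameq]
    have v2 : 0 < 1 * Δ (3 * b / 4 + 0) + (-lam) * Δ (3 * b / 4 + b / 2) + (-δ) * D (3 * b / 4) := by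
      rw [add_zero, hz1]
      have h1 := eps_mul_le hδ0.le (hD2 (3 * b / 4) (by linarith))
      linarith
    have v3 : 1 * Δ (b + 0) + (-lam) * Δ (b + b / 2) + (-δ) * D b < 0 := by
      rw [add_zero, hz2', hΔb]
      have := mul_pos hδ0 (hD1 b hb0)
      linarith
    exact H 1 (-lam) (-δ) 0 (b / 2) le_rfl (by linarith)
      ⟨0, 3 * b / 4, b, le_rfl, by linarith, by linarith, Or.inr ⟨v1, v2, v3⟩⟩
  · push_neg at hzab
    have above : ∀ σ, τ < σ → 0 < Δ σ := by
      intro σ h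
      have h0 : 0 ≤ σ := hτ0.trans h.le
      rcases eq_or_lt_of_le (hnn σ h0) with hz | hp
      · exact absurd hz.symm (hzab σ h)
      · exact hp
    by_cases hz2 : ∃ z, 0 < z ∧ Δ z = 0
    · -- head-zero scenario: contradiction
      exfalso
      obtain ⟨z, hz0, hzz⟩ := hz2
      set Z : Set ℝ := {σ | 0 ≤ σ ∧ Δ σ = 0} with hZ
      have hZne : Z.Nonempty := ⟨z, hz0.le, hzz⟩
      have hZb : BddAbove Z := by
        refine ⟨τ, fun x hx => ?_⟩
        by_contra hc; push_neg at hc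
        exact hzab x hc hx.2
      set aa := sSup Z with haa
      have hza : z ≤ aa := le_csSup hZb ⟨hz0.le, hzz⟩
      have haa0 : 0 < aa := lt_of_lt_of_le hz0 hza
      have hΔaa : Δ aa = 0 := by
        rcases eq_or_lt_of_le (hnn aa haa0.le) with h | h
        · exact h.symm
        · exfalso
          obtain ⟨η, hη, hcl⟩ := cont_close hΔ haa0.le h
          have hmin : 0 < min η aa := lt_min hη haa0
          obtain ⟨z', hz', hzgt⟩ := exists_lt_of_lt_csSup hZne
            (show aa - min η aa / 2 < aa by linarith)
          have hz'le : z' ≤ aa := le_csSup hZb hz'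
          have h3 : |z' - aa| < η := by
            rw [abs_lt]
            constructor
            · linarith [min_le_left η aa]
            · linarith
          have h5 := hcl z' hz'.1 h3
          rw [hz'.2] at h5
          rw [abs_lt] at h5
          linarith
      have haup : ∀ σ, aa < σ → 0 < Δ σ := by
        intro σ h
        have h0 : 0 ≤ σ := haa0.le.trans h.le
        rcases eq_or_lt_of_le (hnn σ h0) with hz' | hp
        · exact absurd (le_csSup hZb ⟨h0, hz'.symm⟩) (by linarith)
        · exact hp
      have hΔ00 : Δ 0 = 0 := by
        rcases eq_or_lt_of_le (hnn 0 le_rfl) with h | h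
        · exact h.symm
        · exact (noP0P 0 aa (aa + 1) le_rfl haa0 (by linarith) h hΔaa
            (haup _ (by linarith))).elim
      have h2a : 0 < Δ (2 * aa) := haup _ (by linarith)
      have h3a : 0 < Δ (3 * aa) := haup _ (by linarith)
      set lam := Δ (2 * aa) / (2 * (Δ (3 * aa) + 1)) with hlam
      have hlam0 : 0 < lam := div_pos h2a (by linarith)
      have hkey : lam * (2 * (Δ (3 * aa) + 1)) = Δ (2 * aa) := by
        rw [hlam]; exact div_mul_cancel₀ _ (by positivity)
      have hlam3 : lam * Δ (3 * aa) < Δ (2 * aa) / 2 := by linarith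
      set δ := lam * Δ (2 * aa) / 2 with hδ
      have hδ0 : 0 < δ := by
        have := mul_pos hlam0 h2a; rw [hδ]; linarith
      have hδhalf : 2 * δ = lam * Δ (2 * aa) := by rw [hδ]; ring
      clear_value lam δ aa
      have v1 : 0 < 1 * Δ (0 + 0) + (-lam) * Δ (0 + aa) + δ * D 0 := by
        simp only [zero_add]
        rw [hΔ00, hΔaa]
        have := mul_pos hδ0 (hD1 0 le_rfl)
        linarith
      have v2 : 1 * Δ (aa + 0) + (-lam) * Δ (aa + aa) + δ * D aa < 0 := by
        rw [add_zero, show aa + aa = 2 * aa by ring, hΔaa]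
        have h1 : δ * D aa ≤ δ := eps_mul_le hδ0.le (hD2 aa haa0.le)
        linarith
      have v3 : 0 < 1 * Δ (2 * aa + 0) + (-lam) * Δ (2 * aa + aa) + δ * D (2 * aa) := by
        rw [add_zero, show 2 * aa + aa = 3 * aa by ring]
        have := mul_pos hδ0 (hD1 (2 * aa) (by linarith))
        linarith
      exact H 1 (-lam) δ 0 aa le_rfl haa0.le
        ⟨0, aa, 2 * aa, le_rfl, haa0, by linarith, Or.inl ⟨v1, v2, v3⟩⟩
    · push_neg at hz2
      have pos' : ∀ σ, 0 < σ → 0 < Δ σ := by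
        intro σ h
        rcases eq_or_lt_of_le (hnn σ h.le) with hz | hp
        · exact absurd hz.symm (hz2 σ h)
        · exact hp
      rcases eq_or_lt_of_le (hnn 0 le_rfl) with h00 | h00
      · right; right; right
        refine ⟨0, le_rfl, fun σ hσ => ⟨fun hz => ?_, fun hz => by rw [hz]; exact h00.symm⟩,
          fun σ' σ'' h1 h2 h3 => ?_, fun σ' σ'' h1 h2 h3 => ?_⟩
        · by_contra hc
          have hσpos : 0 < σ := lt_of_le_of_ne hσ (Ne.symm hc)
          have := pos' σ hσpos
          linarith [hz.le, this]
        · rcases h3 with ⟨h4, _⟩ | ⟨h4, h5⟩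
          · linarith
          · exact mul_pos (pos' σ' h4) (pos' σ'' h5)
        · linarith
      · left
        intro σ hσ
        rcases eq_or_lt_of_le hσ with h | h
        · rw [← h]; exact h00
        · exact pos' σ h

private lemma lemPN (Δ D : ℝ → ℝ) (hΔ : ContinuousOn Δ (Set.Ici 0))
    (hD1 : ∀ σ, 0 ≤ σ → 0 < D σ) (hD2 : ∀ σ, 0 ≤ σ → D σ ≤ 1)
    (H : ∀ α β γ c₀ c₁ : ℝ, 0 ≤ c₀ → 0 ≤ c₁ →
      ¬ DoubleSwitch (fun σ => α * Δ (σ + c₀) + β * Δ (σ + c₁) + γ * D σ))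
    (a b : ℝ) (ha0 : 0 ≤ a) (hab : a < b) (hA : 0 < Δ a) (hB : Δ b < 0) :
    OneSwitchSign Δ := by
  have Hε : ∀ ε : ℝ, ¬ DoubleSwitch (fun σ => Δ σ + ε * D σ) := by
    intro ε
    refine noDS_congr (fun σ => ?_) (H 1 0 ε 0 0 le_rfl le_rfl)
    simp
  have H0 : ¬ DoubleSwitch Δ := by
    refine noDS_congr (fun σ => ?_) (Hε 0)
    simp
  have hb0 : 0 ≤ b := ha0.trans hab.le
  have fA : ∀ σ, b ≤ σ → Δ σ < 0 := by
    intro σ hσ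
    rcases eq_or_lt_of_le hσ with h | h
    · rw [← h]; exact hB
    · have hσ0 : 0 ≤ σ := hb0.trans h.le
      by_contra hc
      push_neg at hc
      rcases eq_or_lt_of_le hc with hz | hp
      · have hm : 0 < min (Δ a) (-Δ b) := lt_min hA (by linarith)
        set ε := min (Δ a) (-Δ b) / 2 with hε
        have hε0 : 0 < ε := by rw [hε]; linarith
        have hεa : ε ≤ Δ a / 2 := by rw [hε]; linarith [min_le_left (Δ a) (-Δ b)]
        have hεb : ε ≤ -Δ b / 2 := by rw [hε]; linarith [min_le_right (Δ a) (-Δ b)]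
        have v1 : 0 < Δ a + ε * D a := by nlinarith [mul_pos hε0 (hD1 a ha0)]
        have v2 : Δ b + ε * D b < 0 := by
          have := eps_mul_le hε0.le (hD2 b hb0); linarith
        have v3 : 0 < Δ σ + ε * D σ := by
          have := mul_pos hε0 (hD1 σ hσ0); linarith
        exact Hε ε ⟨a, b, σ, ha0, hab, h, Or.inl ⟨v1, v2, v3⟩⟩
      · exact H0 ⟨a, b, σ, ha0, hab, h, Or.inl ⟨hA, hB, hp⟩⟩
  have fB : ∀ σ, 0 ≤ σ → σ ≤ a → 0 < Δ σ := by
    intro σ h0 hσa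
    rcases eq_or_lt_of_le hσa with h | h
    · rw [h]; exact hA
    · by_contra hc
      push_neg at hc
      rcases eq_or_lt_of_le hc with hz | hn
      · set ε := -(Δ a) / 2 with hε
        have hε0 : ε < 0 := by rw [hε]; linarith
        have v1 : Δ σ + ε * D σ < 0 := by
          have := mul_neg_of_neg_of_pos hε0 (hD1 σ h0); linarith
        have v2 : 0 < Δ a + ε * D a := by
          have := eps_mul_ge hε0.le (hD2 a ha0); linarith
        have v3 : Δ b + ε * D b < 0 := by
          have := mul_neg_of_neg_of_pos hε0 (hD1 b hb0); linarith
        exact Hε ε ⟨σ, a, b, h0, h, hab, Or.inr ⟨v1, v2, v3⟩⟩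
      · exact H0 ⟨σ, a, b, h0, h, hab, Or.inr ⟨hn, hA, hB⟩⟩
  set P : Set ℝ := {σ | 0 ≤ σ ∧ 0 < Δ σ} with hP
  have hPa : a ∈ P := ⟨ha0, hA⟩
  have hPne : P.Nonempty := ⟨a, hPa⟩
  have hPlt : ∀ p ∈ P, p < b := by
    intro p hp
    by_contra hc; push_neg at hc
    have := fA p hc; linarith [hp.2]
  have hPb : BddAbove P := ⟨b, fun p hp => (hPlt p hp).le⟩
  set e₁ := sSup P with he₁
  have ha1 : a ≤ e₁ := le_csSup hPb hPa
  have he10 : 0 ≤ e₁ := ha0.trans ha1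
  have he1b : e₁ ≤ b := csSup_le hPne (fun p hp => (hPlt p hp).le)
  have C : ∀ σ, 0 ≤ σ → σ < e₁ → 0 < Δ σ := by
    intro σ h0 hσ
    obtain ⟨p, hp, hσp⟩ := exists_lt_of_lt_csSup hPne hσ
    have hpb := hPlt p hp
    by_contra hc; push_neg at hc
    rcases eq_or_lt_of_le hc with hz | hn
    · set ε := -(Δ p) / 2 with hε
      have hε0 : ε < 0 := by rw [hε]; linarith [hp.2]
      have v1 : Δ σ + ε * D σ < 0 := by
        have := mul_neg_of_neg_of_pos hε0 (hD1 σ h0); linarith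
      have v2 : 0 < Δ p + ε * D p := by
        have := eps_mul_ge hε0.le (hD2 p hp.1); linarith [hp.2]
      have v3 : Δ b + ε * D b < 0 := by
        have := mul_neg_of_neg_of_pos hε0 (hD1 b hb0); linarith
      exact Hε ε ⟨σ, p, b, h0, hσp, hpb, Or.inr ⟨v1, v2, v3⟩⟩
    · exact H0 ⟨σ, p, b, h0, hσp, hpb, Or.inr ⟨hn, hp.2, hB⟩⟩
  have hΔe1 : Δ e₁ = 0 := by
    rcases lt_trichotomy (Δ e₁) 0 with hn | hz | hp
    · exfalso
      have hae1 : a < e₁ := by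
        rcases eq_or_lt_of_le ha1 with h | h
        · rw [← h] at hn; linarith
        · exact h
      obtain ⟨η, hη, hcl⟩ := cont_close hΔ he10 (show 0 < -Δ e₁ by linarith)
      have hmin : 0 < min η (e₁ - a) := lt_min hη (by linarith)
      set σ' := e₁ - min η (e₁ - a) / 2 with hσ'
      have h1 : 0 ≤ σ' := by
        rw [hσ']; linarith [min_le_right η (e₁ - a)]
      have h2 : σ' < e₁ := by rw [hσ']; linarith
      have h3 : |σ' - e₁| < η := by
        have h4 : σ' - e₁ = -(min η (e₁ - a) / 2) := by rw [hσ']; ring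
        rw [h4, abs_neg, abs_of_pos (by linarith)]
        linarith [min_le_left η (e₁ - a)]
      have h5 := hcl σ' h1 h3
      rw [abs_lt] at h5
      have := C σ' h1 h2
      linarith
    · exact hz
    · exfalso
      obtain ⟨η, hη, hcl⟩ := cont_close hΔ he10 hp
      set σ' := e₁ + η / 2 with hσ'
      have h1 : 0 ≤ σ' := by rw [hσ']; linarith
      have h3 : |σ' - e₁| < η := by
        have h4 : σ' - e₁ = η / 2 := by rw [hσ']; ring
        rw [h4, abs_of_pos (by linarith)]; linarith
      have h5 := hcl σ' h1 h3
      rw [abs_lt] at h5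
      have h6 : σ' ∈ P := ⟨h1, by linarith⟩
      have := le_csSup hPb h6
      have : e₁ < σ' := by rw [hσ']; linarith
      linarith [le_csSup hPb h6]
  set N : Set ℝ := {σ | 0 ≤ σ ∧ Δ σ < 0} with hN
  have hNb : b ∈ N := ⟨hb0, hB⟩
  have hNne : N.Nonempty := ⟨b, hNb⟩
  have hNlb : BddBelow N := ⟨0, fun x hx => hx.1⟩
  set e₂ := sInf N with he₂
  have he20 : 0 ≤ e₂ := le_csInf hNne (fun x hx => hx.1)
  have hagt : ∀ x ∈ N, a < x := by
    intro x hx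
    by_contra hc; push_neg at hc
    have := fB x hx.1 hc; linarith [hx.2]
  have hae2 : a ≤ e₂ := le_csInf hNne (fun x hx => (hagt x hx).le)
  have E : ∀ σ, e₂ < σ → Δ σ < 0 := by
    intro σ hσ
    obtain ⟨q, hq, hqσ⟩ := exists_lt_of_csInf_lt hNne hσ
    have haq := hagt q hq
    have hσ0 : 0 ≤ σ := he20.trans hσ.le
    by_contra hc; push_neg at hc
    rcases eq_or_lt_of_le hc with hz | hp
    · have hm : 0 < min (Δ a) (-Δ q) := lt_min hA (by linarith [hq.2])
      set ε := min (Δ a) (-Δ q) / 2 with hε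
      have hε0 : 0 < ε := by rw [hε]; linarith
      have hεa : ε ≤ Δ a / 2 := by rw [hε]; linarith [min_le_left (Δ a) (-Δ q)]
      have hεq : ε ≤ -Δ q / 2 := by rw [hε]; linarith [min_le_right (Δ a) (-Δ q)]
      have v1 : 0 < Δ a + ε * D a := by nlinarith [mul_pos hε0 (hD1 a ha0)]
      have v2 : Δ q + ε * D q < 0 := by
        have := eps_mul_le hε0.le (hD2 q hq.1); linarith [hq.2]
      have v3 : 0 < Δ σ + ε * D σ := by
        have := mul_pos hε0 (hD1 σ hσ0); linarith
      exact Hε ε ⟨a, q, σ, ha0, haq, hqσ, Or.inl ⟨v1, v2, v3⟩⟩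
    · exact H0 ⟨a, q, σ, ha0, haq, hqσ, Or.inl ⟨hA, hq.2, hp⟩⟩
  have hΔe2 : Δ e₂ = 0 := by
    rcases lt_trichotomy (Δ e₂) 0 with hn | hz | hp
    · exfalso
      have hae2' : a < e₂ := by
        rcases eq_or_lt_of_le hae2 with h | h
        · rw [← h] at hn; linarith
        · exact h
      have he2pos : 0 < e₂ := lt_of_le_of_lt ha0 hae2'
      obtain ⟨η, hη, hcl⟩ := cont_close hΔ he20 (show 0 < -Δ e₂ by linarith)
      have hmin : 0 < min η e₂ := lt_min hη he2pos
      set σ' := e₂ - min η e₂ / 2 with hσ'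
      have h1 : 0 ≤ σ' := by rw [hσ']; linarith [min_le_right η e₂]
      have h3 : |σ' - e₂| < η := by
        have h4 : σ' - e₂ = -(min η e₂ / 2) := by rw [hσ']; ring
        rw [h4, abs_neg, abs_of_pos (by linarith)]
        linarith [min_le_left η e₂]
      have h5 := hcl σ' h1 h3
      rw [abs_lt] at h5
      have h6 : σ' ∈ N := ⟨h1, by linarith⟩
      have h7 : σ' < e₂ := by rw [hσ']; linarith
      linarith [csInf_le hNlb h6]
    · exact hz
    · exfalso
      obtain ⟨η, hη, hcl⟩ := cont_close hΔ he20 hp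
      set σ' := e₂ + η / 2 with hσ'
      have h1 : 0 ≤ σ' := by rw [hσ']; linarith
      have h3 : |σ' - e₂| < η := by
        have h4 : σ' - e₂ = η / 2 := by rw [hσ']; ring
        rw [h4, abs_of_pos (by linarith)]; linarith
      have h5 := hcl σ' h1 h3
      rw [abs_lt] at h5
      have h6 := E σ' (by rw [hσ']; linarith)
      linarith
  have he12 : e₁ ≤ e₂ := by
    by_contra hc; push_neg at hc
    have h1 := C ((e₁ + e₂) / 2) (by linarith) (by linarith)
    have h2 := E ((e₁ + e₂) / 2) (by linarith)
    linarith
  have Zmid : ∀ σ, e₁ < σ → σ < e₂ → Δ σ = 0 := by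
    intro σ h1 h2
    have h0 : 0 ≤ σ := he10.trans h1.le
    rcases lt_trichotomy (Δ σ) 0 with hn | hz | hp
    · exact absurd (csInf_le hNlb ⟨h0, hn⟩) (by linarith)
    · exact hz
    · exact absurd (le_csSup hPb ⟨h0, hp⟩) (by linarith)
  rcases eq_or_lt_of_le he12 with heq | hlt
  · right; right; right
    refine ⟨e₁, he10, fun σ hσ => ⟨fun hz => ?_, fun hz => by rw [hz]; exact hΔe1⟩,
      fun σ' σ'' h1 h2 h3 => ?_, fun σ' σ'' h1 h2 h3 => ?_⟩
    · rcases lt_trichotomy σ e₁ with h | h | h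
      · have := C σ hσ h; exact absurd hz (by linarith)
      · exact h
      · have := E σ (by rw [← heq]; exact h); exact absurd hz (by linarith)
    · rcases h3 with ⟨h4, h5⟩ | ⟨h4, h5⟩
      · exact mul_pos (C σ' h1 h4) (C σ'' h2 h5)
      · exact mul_pos_of_neg_of_neg (E σ' (heq ▸ h4)) (E σ'' (heq ▸ h5))
    · exact mul_neg_of_pos_of_neg (C σ' h1 h2) (E σ'' (heq ▸ h3))
  · exfalso
    have he1pos : 0 < e₁ := by
      rcases eq_or_lt_of_le he10 with h | h
      · exfalso
        have := fB 0 le_rfl ha0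
        rw [← h] at hΔe1; linarith
      · exact h
    have hL0 : 0 < e₂ - e₁ := by linarith
    have hminc : 0 < min e₁ (e₂ - e₁) := lt_min he1pos hL0
    set c := min e₁ (e₂ - e₁) / 2 with hcdef
    have hc0 : 0 < c := by rw [hcdef]; linarith
    have hce1 : c ≤ e₁ / 2 := by rw [hcdef]; linarith [min_le_left e₁ (e₂ - e₁)]
    have hcL : c ≤ (e₂ - e₁) / 2 := by rw [hcdef]; linarith [min_le_right e₁ (e₂ - e₁)]
    have hA1 : 0 < Δ c := C c hc0.le (by linarith)
    have hA2 : 0 < Δ (3 * c / 2) := C _ (by linarith) (by linarith)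
    have hz2 : Δ (e₂ - c / 2) = 0 := Zmid _ (by linarith) (by linarith)
    have hA3 : Δ (e₂ + c / 2) < 0 := E _ (by linarith)
    set A₃ := -Δ (e₂ + c / 2) with hA₃d
    have hA₃ : 0 < A₃ := by rw [hA₃d]; linarith
    set σ₂ := e₂ - 3 * c / 2 with hσ₂
    set σ₃ := e₂ - c with hσ₃
    have hσ₂0 : 0 < σ₂ := by rw [hσ₂]; linarith
    have hσ₃0 : 0 < σ₃ := by rw [hσ₃]; linarith
    have hD0le := hD2 0 le_rfl
    have hD01 := hD1 0 le_rfl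
    have hDσ₂ := hD1 σ₂ hσ₂0.le
    have hDσ₃pos := hD1 σ₃ hσ₃0.le
    set K := D σ₃ / A₃ + 1 with hK
    have hK0 : 0 < K := by
      have := div_pos hDσ₃pos hA₃; rw [hK]; linarith
    set δ := Δ c / (2 * (K * Δ (3 * c / 2) + 1)) with hδ
    have hden : 0 < 2 * (K * Δ (3 * c / 2) + 1) := by
      have := mul_pos hK0 hA2; linarith
    have hδ0 : 0 < δ := by rw [hδ]; exact div_pos hA1 hden
    set μ := δ * K with hμ
    have hμ0 : 0 < μ := mul_pos hδ0 hK0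
    clear_value c A₃ σ₂ σ₃ K δ μ
    have hδeq : δ * (2 * (K * Δ (3 * c / 2) + 1)) = Δ c := by
      rw [hδ]; exact div_mul_cancel₀ _ (ne_of_gt hden)
    have hKeq : K * A₃ = D σ₃ + A₃ := by
      rw [hK, add_mul, one_mul, div_mul_cancel₀ _ (ne_of_gt hA₃)]
    have v1 : (-1) * Δ (0 + c) + μ * Δ (0 + 3 * c / 2) + δ * D 0 < 0 := by
      simp only [zero_add]
      have h1 : δ * D 0 ≤ δ := eps_mul_le hδ0.le hD0le
      have h3 : μ * Δ (3 * c / 2) = δ * (K * Δ (3 * c / 2)) := by rw [hμ]; ring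
      linarith [hδeq]
    have e2a : σ₂ + c = e₂ - c / 2 := by rw [hσ₂]; ring
    have e2b : σ₂ + 3 * c / 2 = e₂ := by rw [hσ₂]; ring
    have v2 : 0 < (-1) * Δ (σ₂ + c) + μ * Δ (σ₂ + 3 * c / 2) + δ * D σ₂ := by
      rw [e2a, e2b, hz2, hΔe2]
      have := mul_pos hδ0 hDσ₂
      linarith
    have e3a : σ₃ + c = e₂ := by rw [hσ₃]; ring
    have e3b : σ₃ + 3 * c / 2 = e₂ + c / 2 := by rw [hσ₃]; ring
    have v3 : (-1) * Δ (σ₃ + c) + μ * Δ (σ₃ + 3 * c / 2) + δ * D σ₃ < 0 := by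
      rw [e3a, e3b, hΔe2]
      have h4 : μ * Δ (e₂ + c / 2) = -(δ * (K * A₃)) := by rw [hμ, hA₃d]; ring
      have h5 : δ * (K * A₃) = δ * D σ₃ + δ * A₃ := by rw [hKeq]; ring
      have := mul_pos hδ0 hA₃
      linarith
    exact H (-1) μ δ c (3 * c / 2) hc0.le (by linarith)
      ⟨0, σ₂, σ₃, le_rfl, hσ₂0, by rw [hσ₂, hσ₃]; linarith, Or.inr ⟨v1, v2, v3⟩⟩

private lemma main_analysis (Δ D : ℝ → ℝ) (hΔ : ContinuousOn Δ (Set.Ici 0))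
    (hD1 : ∀ σ, 0 ≤ σ → 0 < D σ) (hD2 : ∀ σ, 0 ≤ σ → D σ ≤ 1)
    (H : ∀ α β γ c₀ c₁ : ℝ, 0 ≤ c₀ → 0 ≤ c₁ →
      ¬ DoubleSwitch (fun σ => α * Δ (σ + c₀) + β * Δ (σ + c₁) + γ * D σ)) :
    OneSwitchSign Δ := by
  have Hneg : ∀ α β γ c₀ c₁ : ℝ, 0 ≤ c₀ → 0 ≤ c₁ →
      ¬ DoubleSwitch (fun σ => α * (-Δ (σ + c₀)) + β * (-Δ (σ + c₁)) + γ * D σ) := by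
    intro α β γ c₀ c₁ hc₀ hc₁
    refine noDS_congr (fun σ => ?_) (H (-α) (-β) γ c₀ c₁ hc₀ hc₁)
    ring
  by_cases hall : ∀ σ, 0 ≤ σ → Δ σ = 0
  · right; right; left; exact hall
  · push_neg at hall
    obtain ⟨τ, hτ0, hτne⟩ := hall
    by_cases hPN : ∃ x y, 0 ≤ x ∧ x < y ∧ 0 < Δ x ∧ Δ y < 0
    · obtain ⟨x, y, h1, h2, h3, h4⟩ := hPN
      exact lemPN Δ D hΔ hD1 hD2 H x y h1 h2 h3 h4
    · by_cases hNP : ∃ x y, 0 ≤ x ∧ x < y ∧ Δ x < 0 ∧ 0 < Δ y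
      · obtain ⟨x, y, h1, h2, h3, h4⟩ := hNP
        exact oss_neg (lemPN (fun σ => -Δ σ) D hΔ.neg hD1 hD2 Hneg x y h1 h2
          (by beta_reduce; linarith) (by beta_reduce; linarith))
      · push_neg at hPN hNP
        rcases lt_or_gt_of_ne hτne with hneg | hpos
        · -- Δ τ < 0 : show Δ ≤ 0 everywhere
          have hnn' : ∀ σ, 0 ≤ σ → 0 ≤ -Δ σ := by
            intro σ hσ
            by_contra hc
            push_neg at hc
            have hp : 0 < Δ σ := by linarith
            rcases lt_trichotomy σ τ with h | h | h
            · have := hPN σ τ hσ h hp; linarith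
            · rw [h] at hp; linarith
            · have := hNP τ σ hτ0 h hneg; linarith
          exact oss_neg (lemP (fun σ => -Δ σ) D hΔ.neg hD1 hD2 Hneg hnn' τ hτ0
            (by beta_reduce; linarith))
        · -- Δ τ > 0 : show Δ ≥ 0 everywhere
          have hnn : ∀ σ, 0 ≤ σ → 0 ≤ Δ σ := by
            intro σ hσ
            by_contra hc
            push_neg at hc
            rcases lt_trichotomy σ τ with h | h | h
            · have := hNP σ τ hσ h hc; linarith
            · rw [h] at hc; linarith
            · have := hPN τ σ hτ0 h hpos; linarith
          exact lemP Δ D hΔ hD1 hD2 H hnn τ hτ0 hpos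

theorem ext_one_switch_iff_ext_weak_one_switch (D : ℝ → ℝ) (hD : IsDiscount D)
    (hcont : ContinuousOn D (Set.Ici 0)) :
    ExtOneSwitch D ↔ ExtWeakOneSwitch D := by
  obtain ⟨hD0, hDpos, hDanti, _⟩ := hD
  have hD2 : ∀ σ, 0 ≤ σ → D σ ≤ 1 := by
    intro σ hσ
    rcases hσ.eq_or_lt with h | h
    · rw [← h, hD0]
    · have := hDanti Set.self_mem_Ici (Set.mem_Ici.mpr hσ) h
      rw [hD0] at this; exact this.le
  constructor
  · intro hO n m hn hm t s v w hts hss ht0 hs0 hv hw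
    exact oss_noDS (hO n m hn hm t s v w hts hss ht0 hs0 hv hw)
  · intro hW n m hn hm t s v w hts hss ht0 hs0 hv hw
    have hcontΔ : ContinuousOn (diffFn D t s v w) (Set.Ici 0) := by
      unfold diffFn
      apply ContinuousOn.sub
      · apply continuousOn_finset_sum
        intro i _
        apply ContinuousOn.mul _ continuousOn_const
        apply hcont.comp (continuous_const.add continuous_id).continuousOn
        intro σ hσ
        exact Set.mem_Ici.mpr (add_nonneg (ht0 i) (Set.mem_Ici.mp hσ))
      · apply continuousOn_finset_sum
        intro j _
        apply ContinuousOn.mul _ continuousOn_const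
        apply hcont.comp (continuous_const.add continuous_id).continuousOn
        intro σ hσ
        exact Set.mem_Ici.mpr (add_nonneg (hs0 j) (Set.mem_Ici.mp hσ))
    exact main_analysis (diffFn D t s v w) D hcontΔ hDpos hD2
      (fun α β γ c₀ c₁ hc₀ hc₁ => master_pert D hW t s v w ht0 hs0 α β γ c₀ c₁ hc₀ hc₁)
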